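/- For real p > 1 and 0 ≤ b < a, ((a^p − b^p)/(a − b))^{p/(p−1)} ≤ p^{p/(p−1)} · (a^p + b^p)/2. -/

import Mathlib

open Finset

variable {V : Type*}

/-- Signless p-Laplacian form: `Q_p(x) = Σ_{{i,j}∈E} |x_i + x_j|^p`. -/
noncomputable def Qp [Fintype V] (G : SimpleGraph V) [Fintype G.edgeSet] (p : ℝ)
    (x : V → ℝ) : ℝ :=
  ∑ e ∈ G.edgeFinset,
    Sym2.lift ⟨fun i j => |x i + x j| ^ p, fun i j => by simp [add_comm]⟩ e

/-- The p-norm unit sphere condition. -/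
def unitSphere [Fintype V] (p : ℝ) (x : V → ℝ) : Prop := ∑ i, |x i| ^ p = 1

/-- Smallest signless p-Laplacian eigenvalue. -/
noncomputable def qp [Fintype V] (G : SimpleGraph V) [Fintype G.edgeSet] (p : ℝ) : ℝ :=
  sInf {r | ∃ x : V → ℝ, unitSphere p x ∧ Qp G p x = r}

/-- Largest signless p-Laplacian eigenvalue. -/
noncomputable def lamp [Fintype V] (G : SimpleGraph V) [Fintype G.edgeSet] (p : ℝ) : ℝ :=
  sSup {r | ∃ x : V → ℝ, unitSphere p x ∧ Qp G p x = r}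

open Classical in
/-- Number of edges with both endpoints in `S`. -/
noncomputable def eIn [Fintype V] (G : SimpleGraph V) [Fintype G.edgeSet] (S : Finset V) : ℕ :=
  (G.edgeFinset.filter fun e => ∀ v ∈ e, v ∈ S).card

open Classical in
/-- Number of edges with exactly one endpoint in `U`. -/
noncomputable def cutN [Fintype V] (G : SimpleGraph V) [Fintype G.edgeSet] (U : Finset V) : ℕ :=
  (G.edgeFinset.filter fun e => (∃ v ∈ e, v ∈ U) ∧ (∃ w ∈ e, w ∉ U)).card

/-- Desai–Rao bipartiteness parameter ψ(G). -/
noncomputable def psi [Fintype V] [DecidableEq V] (G : SimpleGraph V) [Fintype G.edgeSet] : ℝ :=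
  sInf {r | ∃ S T : Finset V, Disjoint S T ∧ (S ∪ T).Nonempty ∧
    r = (2 * eIn G S + 2 * eIn G T + cutN G (S ∪ T)) / (S ∪ T).card}

open Classical in
/-- `h_g(U)`: min over thresholds `0 ≤ t < max g` of `cut(C_t)/|C_t|` where `C_t = {i : g i > t}`. -/
noncomputable def hgC [Fintype V] [DecidableEq V] (G : SimpleGraph V) [Fintype G.edgeSet]
    (g : V → ℝ) : ℝ :=
  sInf {r | ∃ t : ℝ, 0 ≤ t ∧ t < sSup (Set.range g) ∧
    r = (cutN G (univ.filter fun i => t < g i) : ℝ) / (univ.filter fun i => t < g i).card}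

/-- Eigenpair of the signless p-Laplacian. -/
def IsEigenpair [Fintype V] (G : SimpleGraph V) [DecidableRel G.Adj] (p : ℝ)
    (x : V → ℝ) (μ : ℝ) : Prop :=
  ∀ k, ∑ j ∈ G.neighborFinset k, Real.sign (x k + x j) * |x k + x j| ^ (p - 1)
      = μ * (Real.sign (x k) * |x k| ^ (p - 1))

/-- Vertex bipartiteness: minimum number of vertices to delete to make `G` bipartite. -/
noncomputable def nuG [Fintype V] [DecidableEq V] (G : SimpleGraph V) : ℕ :=
  sInf {k | ∃ S : Finset V, S.card = k ∧ ((SimpleGraph.induce ((↑S : Set V)ᶜ) G).Colorable 2)}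


open intervalIntegral MeasureTheory in
theorem stmt_7_aux (p a b : ℝ) (hp : 1 < p) (hb : 0 ≤ b) (hab : b < a) :
    ((a ^ p - b ^ p) / (a - b)) ^ (p / (p - 1)) ≤
      p ^ (p / (p - 1)) * ((a ^ p + b ^ p) / 2) := by
  have ha : 0 < a := lt_of_le_of_lt hb hab
  have hp0 : 0 < p := lt_trans one_pos hp
  have hp1 : 0 < p - 1 := sub_pos.mpr hp
  have hba : (0:ℝ) < a - b := by linarith
  set X : ℝ := (a ^ p + b ^ p) / 2 with hXdef
  have hap : 0 < a ^ p := Real.rpow_pos_of_pos ha p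
  have hbp : 0 ≤ b ^ p := Real.rpow_nonneg hb p
  have hX : 0 < X := by rw [hXdef]; positivity
  set M : ℝ := X ^ (1/p) with hMdef
  have hM : 0 < M := Real.rpow_pos_of_pos hX _
  have hMp : M ^ p = X := by
    rw [hMdef, ← Real.rpow_mul hX.le, one_div, inv_mul_cancel₀ hp0.ne', Real.rpow_one]
  -- Hermite–Hadamard for t^p on [b,a]
  have hintp : IntervalIntegrable (fun t : ℝ => t ^ p) volume b a :=
    intervalIntegral.intervalIntegrable_rpow (Or.inl hp0.le)
  have hintlin : IntervalIntegrable
      (fun t : ℝ => ((a - t) * b ^ p + (t - b) * a ^ p) / (a - b)) volume b a := by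
    apply Continuous.intervalIntegrable; continuity
  have hchord : ∀ t ∈ Set.Icc b a, t ^ p ≤ ((a - t) * b ^ p + (t - b) * a ^ p) / (a - b) := by
    intro t ht
    have hα : 0 ≤ (a - t) / (a - b) := by apply div_nonneg _ hba.le; linarith [ht.2]
    have hβ : 0 ≤ (t - b) / (a - b) := by apply div_nonneg _ hba.le; linarith [ht.1]
    have hαβ : (a - t) / (a - b) + (t - b) / (a - b) = 1 := by field_simp; ring
    have key := (convexOn_rpow hp.le).2 (Set.mem_Ici.mpr hb) (Set.mem_Ici.mpr ha.le) hα hβ hαβ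
    simp only [smul_eq_mul] at key
    have ht' : (a - t) / (a - b) * b + (t - b) / (a - b) * a = t := by field_simp; ring
    rw [ht'] at key
    calc t ^ p ≤ (a - t) / (a - b) * b ^ p + (t - b) / (a - b) * a ^ p := key
      _ = ((a - t) * b ^ p + (t - b) * a ^ p) / (a - b) := by ring
  have hHH : ∫ t in b..a, t ^ p ≤ (a - b) * X := by
    have h1 := intervalIntegral.integral_mono_on hab.le hintp hintlin hchord
    have h2 : ∫ t in b..a, ((a - t) * b ^ p + (t - b) * a ^ p) / (a - b) = (a - b) * X := by
      rw [show (fun t : ℝ => ((a - t) * b ^ p + (t - b) * a ^ p) / (a - b))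
          = (fun t : ℝ => (a * b ^ p - b * a ^ p) / (a - b) + ((a ^ p - b ^ p) / (a - b)) * t) by
        funext t; field_simp; ring]
      rw [intervalIntegral.integral_add (intervalIntegrable_const)
        ((intervalIntegrable_id).const_mul _), intervalIntegral.integral_const_mul,
        integral_id, intervalIntegral.integral_const]
      rw [smul_eq_mul, hXdef]
      field_simp
      ring
    linarith
  -- pointwise Young bound on p * t^(p-1)
  have hintp1 : IntervalIntegrable (fun t : ℝ => p * t ^ (p-1)) volume b a :=
    (intervalIntegral.intervalIntegrable_rpow (Or.inl hp1.le)).const_mul _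
  have hintg : IntervalIntegrable (fun t : ℝ => ((p - 1) * t ^ p + X) / M) volume b a :=
    ((hintp.const_mul _).add intervalIntegrable_const).div_const _
  have hyoung : ∀ t ∈ Set.Icc b a, p * t ^ (p-1) ≤ ((p - 1) * t ^ p + X) / M := by
    intro t ht
    have ht0 : 0 ≤ t := le_trans hb ht.1
    have hkey := Real.geom_mean_le_arith_mean2_weighted
      (div_nonneg hp1.le hp0.le) (by positivity : (0:ℝ) ≤ 1/p)
      (Real.rpow_nonneg ht0 p) (le_of_lt (hMp ▸ hX) : 0 ≤ M ^ p)
      (by field_simp; ring)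
    have e1 : (t ^ p) ^ ((p-1)/p) = t ^ (p-1) := by
      rw [← Real.rpow_mul ht0]; congr 1; field_simp
    have e2 : (M ^ p) ^ (1/p : ℝ) = M := by
      rw [← Real.rpow_mul hM.le, show p * (1/p) = 1 by field_simp, Real.rpow_one]
    rw [e1, e2, hMp] at hkey
    have h2 := mul_le_mul_of_nonneg_left hkey hp0.le
    rw [le_div_iff₀ hM]
    calc p * t ^ (p-1) * M = p * (t ^ (p-1) * M) := by rw [mul_assoc]
      _ ≤ p * ((p-1)/p * t^p + 1/p * X) := h2
      _ = (p-1) * t^p + X := by field_simp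
  have hint1 : ∫ t in b..a, p * t ^ (p-1) = a ^ p - b ^ p := by
    rw [intervalIntegral.integral_const_mul, integral_rpow (Or.inl (by linarith)),
      show p - 1 + 1 = p by ring]
    field_simp
  have hint2 : ∫ t in b..a, ((p - 1) * t ^ p + X) / M
      = ((p-1) * ∫ t in b..a, t ^ p) / M + (X * (a-b)) / M := by
    rw [intervalIntegral.integral_div, intervalIntegral.integral_add (hintp.const_mul _)
      intervalIntegrable_const, intervalIntegral.integral_const_mul,
      intervalIntegral.integral_const, smul_eq_mul]
    ring
  have hXM : X / M = M ^ (p - 1) := by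
    rw [Real.rpow_sub hM, Real.rpow_one, hMp]
  have hmono := intervalIntegral.integral_mono_on hab.le hintp1 hintg hyoung
  have hmain : a ^ p - b ^ p ≤ p * M ^ (p-1) * (a - b) := by
    rw [← hint1]
    refine hmono.trans ?_
    rw [hint2]
    have hstep : ((p-1) * ∫ t in b..a, t ^ p) / M ≤ ((p-1) * ((a-b) * X)) / M := by
      gcongr
    have heq : ((p-1) * ((a-b) * X)) / M + (X * (a-b)) / M = p * (X / M) * (a - b) := by
      field_simp; ring
    rw [hXM] at heq
    linarith
  have hdiv : (a ^ p - b ^ p) / (a - b) ≤ p * M ^ (p-1) := by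
    rw [div_le_iff₀ hba]; exact hmain
  have h0 : 0 ≤ (a ^ p - b ^ p) / (a - b) := by
    apply div_nonneg _ hba.le
    have := Real.rpow_le_rpow hb hab.le hp0.le
    linarith
  have hq : 0 ≤ p / (p - 1) := by positivity
  have hfin := Real.rpow_le_rpow h0 hdiv hq
  rw [Real.mul_rpow hp0.le (Real.rpow_nonneg hM.le _)] at hfin
  have hMX : (M ^ (p-1)) ^ (p/(p-1)) = X := by
    rw [← Real.rpow_mul hM.le, show (p-1) * (p/(p-1)) = p by field_simp]
    exact hMp
  rw [hMX] at hfin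
  exact hfin

theorem stmt_7 (p a b : ℝ) (hp : 1 < p) (hb : 0 ≤ b) (hab : b < a) :
    ((a ^ p - b ^ p) / (a - b)) ^ (p / (p - 1)) ≤
      p ^ (p / (p - 1)) * ((a ^ p + b ^ p) / 2) := by
  exact stmt_7_aux p a b hp hb hab
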